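/- Let p ∈ K[X] and let q ∈ K[X] be a polynomial satisfying 2q + 2X·q' + p·p' + X·p'' = 0 (primes denoting polynomial derivatives). Define K-linear endomorphisms E, H, Y of the polynomial ring K[X] by E(f) = X·f, H(f) = p·f + 2X·f', Y(f) = q·f − p·f' − X·f''. Then these endomorphisms satisfy H∘E − E∘H = 2E, H∘Y − Y∘H = −2Y, and E∘Y − Y∘E = H; equivalently, the assignment x ↦ E, h ↦ H, y ↦ Y extends to a Lie algebra homomorphism sl₂(K) → End_K(K[X]), making K[X] an sl₂(K)-module (denoted V(p)). -/
import Mathlib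


open Polynomial

/-- If `q` satisfies `2q + 2X q' + p p' + X p'' = 0`, then the operators
`E f = X f`, `H f = p f + 2X f'`, `Y f = q f - p f' - X f''` on `K[X]` satisfy the
`sl₂` commutation relations `HE - EH = 2E`, `HY - YH = -2Y`, `EY - YE = H`. -/
theorem stmt0 (K : Type*) [Field K] [IsAlgClosed K] [CharZero K]
    (p q : K[X])
    (hq : 2 * q + 2 * X * derivative q + p * derivative p
        + X * derivative (derivative p) = 0)
    (E H Y : Module.End K K[X])
    (hE : ∀ f : K[X], E f = X * f)
    (hH : ∀ f : K[X], H f = p * f + 2 * X * derivative f)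
    (hY : ∀ f : K[X], Y f = q * f - p * derivative f - X * derivative (derivative f)) :
    H * E - E * H = 2 • E ∧ H * Y - Y * H = -(2 • Y) ∧ E * Y - Y * E = H := by
  refine ⟨?_, ?_, ?_⟩ <;> refine LinearMap.ext fun f => ?_ <;>
    simp only [Module.End.mul_apply, LinearMap.sub_apply, LinearMap.smul_apply,
      LinearMap.neg_apply, hE, hH, hY, derivative_mul, derivative_sub, derivative_add, derivative_X,
      derivative_ofNat, derivative_one, derivative_zero, smul_eq_mul]
  · ring
  · linear_combination f * hq
  · ring
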